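/- Let Λ = ⋀(ℂ²) be the 4-dimensional exterior algebra over ℂ on two generators θ, η (with basis 1, θ, η, θη), equipped with any norm. In the Banach space C(S¹, Λ) of continuous functions from the unit circle S¹ ⊆ ℂ to Λ with the supremum norm, the ℂ-linear span of the set of functions {z ↦ z^m(1 + mθη), z ↦ z^m(1 − mθη), z ↦ z^m(θ − iη), z ↦ z^m(θ + iη) : m ∈ ℤ} ∪ {1, θ, η, θη} is dense. -/

import Mathlib

/-! Auxiliary material for the super Peter–Weyl theorem for `SU(1|1)`. -/

/-- The character `z ↦ z^m` on the circle, as a continuous map. -/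
noncomputable def charC (m : ℤ) : C(Circle, ℂ) :=
  ⟨fun z => (z : ℂ) ^ m, by
    apply Continuous.zpow₀ continuous_subtype_val
    intro z; exact Or.inl (Circle.coe_ne_zero z)⟩

@[simp] lemma charC_apply (m : ℤ) (z : Circle) : charC m z = (z : ℂ) ^ m := rfl

lemma charC_mul (m n : ℤ) : charC m * charC n = charC (m + n) := by
  ext z; simp [zpow_add₀ (Circle.coe_ne_zero z)]

lemma charC_star (m : ℤ) : star (charC m) = charC (-m) := by
  ext z
  simp only [ContinuousMap.star_apply, charC_apply, zpow_neg]
  rw [RCLike.star_def, map_zpow₀, ← Circle.coe_inv_eq_conj, Circle.coe_inv, inv_zpow]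

/-- The span of the characters, as a star subalgebra of `C(Circle, ℂ)`. -/
noncomputable def charAlg : StarSubalgebra ℂ C(Circle, ℂ) where
  carrier := Submodule.span ℂ (Set.range charC)
  add_mem' := fun h h' => Submodule.add_mem _ h h'
  mul_mem' := by
    intro x y hx hy
    show x * y ∈ Submodule.span ℂ (Set.range charC)
    have := Submodule.mul_mem_mul (M := Submodule.span ℂ (Set.range charC)) hx hy
    rw [Submodule.span_mul_span] at this
    refine Submodule.span_le.2 ?_ this
    rintro _ ⟨_, ⟨m, rfl⟩, _, ⟨n, rfl⟩, rfl⟩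
    exact Submodule.subset_span ⟨m + n, (charC_mul m n).symm⟩
  algebraMap_mem' := fun c => by
    show algebraMap ℂ C(Circle, ℂ) c ∈ Submodule.span ℂ (Set.range charC)
    have h1 : (1 : C(Circle, ℂ)) ∈ Submodule.span ℂ (Set.range charC) :=
      Submodule.subset_span ⟨0, by ext z; simp⟩
    simpa [Algebra.algebraMap_eq_smul_one] using Submodule.smul_mem _ c h1
  star_mem' := by
    intro x hx
    show star x ∈ Submodule.span ℂ (Set.range charC)
    refine Submodule.span_induction ?_ ?_ ?_ ?_ hx
    · rintro _ ⟨m, rfl⟩; rw [charC_star]; exact Submodule.subset_span ⟨-m, rfl⟩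
    · simp only [star_zero]; exact Submodule.zero_mem _
    · intro a b _ _ ha hb; rw [star_add]; exact Submodule.add_mem _ ha hb
    · intro c a _ ha; rw [star_smul]; exact Submodule.smul_mem _ _ ha

/-- Scalar Stone–Weierstrass on the circle: trigonometric polynomials are dense. -/
lemma charAlg_dense : Dense (Submodule.span ℂ (Set.range charC) : Set C(Circle, ℂ)) := by
  have h : charAlg.topologicalClosure = ⊤ := by
    apply ContinuousMap.starSubalgebra_topologicalClosure_eq_top_of_separatesPoints
    intro x y hxy
    refine ⟨(charC 1 : Circle → ℂ), ⟨charC 1, Submodule.subset_span ⟨1, rfl⟩, rfl⟩, ?_⟩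
    simpa using fun h => hxy (Circle.ext (by simpa using h))
  rw [dense_iff_closure_eq]
  have h2 := congrArg (SetLike.coe) h
  rw [StarSubalgebra.topologicalClosure_coe] at h2
  exact (by simpa using h2 : closure (charAlg : Set C(Circle, ℂ)) = Set.univ)

set_option linter.unreachableTactic false in
set_option linter.unusedTactic false in
/-- The four elements `1, θ, η, θη` span the exterior algebra `⋀(ℂ²)`. -/
lemma ext_span_top :
    Submodule.span ℂ ({1, ExteriorAlgebra.ι ℂ (Pi.single 0 1 : Fin 2 → ℂ),
      ExteriorAlgebra.ι ℂ (Pi.single 1 1 : Fin 2 → ℂ),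
      ExteriorAlgebra.ι ℂ (Pi.single 0 1 : Fin 2 → ℂ) *
        ExteriorAlgebra.ι ℂ (Pi.single 1 1 : Fin 2 → ℂ)} :
      Set (ExteriorAlgebra ℂ (Fin 2 → ℂ))) = ⊤ := by
  set eθ : ExteriorAlgebra ℂ (Fin 2 → ℂ) := ExteriorAlgebra.ι ℂ (Pi.single 0 1 : Fin 2 → ℂ)
  set eη : ExteriorAlgebra ℂ (Fin 2 → ℂ) := ExteriorAlgebra.ι ℂ (Pi.single 1 1 : Fin 2 → ℂ)
  set M := Submodule.span ℂ ({1, eθ, eη, eθ * eη} : Set (ExteriorAlgebra ℂ (Fin 2 → ℂ))) with hM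
  have h1 : (1 : ExteriorAlgebra ℂ (Fin 2 → ℂ)) ∈ M := Submodule.subset_span (by simp)
  have ha : eθ ∈ M := Submodule.subset_span (by simp)
  have hb : eη ∈ M := Submodule.subset_span (by simp)
  have hab : eθ * eη ∈ M := Submodule.subset_span (by simp)
  have haa : eθ * eθ = 0 := ExteriorAlgebra.ι_sq_zero _
  have hbb : eη * eη = 0 := ExteriorAlgebra.ι_sq_zero _
  have hba : eη * eθ = -(eθ * eη) := by
    have := ExteriorAlgebra.ι_add_mul_swap (R := ℂ)
      (Pi.single 0 1 : Fin 2 → ℂ) (Pi.single 1 1 : Fin 2 → ℂ)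
    rw [eq_neg_iff_add_eq_zero, add_comm]
    exact this
  have hmul : ∀ x ∈ M, ∀ y ∈ M, x * y ∈ M := by
    intro x hx y hy
    have := Submodule.mul_mem_mul (M := M) hx hy
    rw [hM, Submodule.span_mul_span] at this
    refine Submodule.span_le.2 ?_ this
    rintro _ ⟨u, hu, v, hv, rfl⟩
    simp only [Set.mem_insert_iff, Set.mem_singleton_iff] at hu hv
    rcases hu with rfl | rfl | rfl | rfl <;> rcases hv with rfl | rfl | rfl | rfl <;>
      simp only [one_mul, mul_one] <;>
      first
        | exact h1 | exact ha | exact hb | exact hab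
        | (rw [haa]; exact Submodule.zero_mem _)
        | (rw [hbb]; exact Submodule.zero_mem _)
        | (rw [hba]; exact Submodule.neg_mem _ hab)
        | (rw [← mul_assoc, haa, zero_mul]; exact Submodule.zero_mem _)
        | (rw [← mul_assoc, hba, neg_mul, ← mul_assoc, haa, zero_mul, neg_zero];
           exact Submodule.zero_mem _)
        | (rw [mul_assoc, hbb, mul_zero]; exact Submodule.zero_mem _)
        | (rw [mul_assoc, hba, mul_neg, ← mul_assoc, ← mul_assoc, haa, zero_mul, zero_mul,
            neg_zero]; exact Submodule.zero_mem _)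
        | (rw [mul_assoc eθ eη eη, hbb, mul_zero]; exact Submodule.zero_mem _)
        | (rw [← mul_assoc, hba, neg_mul, mul_assoc, hbb, mul_zero, neg_zero];
           exact Submodule.zero_mem _)
        | (rw [mul_assoc, hba, mul_neg, ← mul_assoc, haa, zero_mul, neg_zero];
           exact Submodule.zero_mem _)
        | (rw [mul_assoc, ← mul_assoc eη eθ eη, hba, neg_mul, mul_neg, mul_assoc, hbb, mul_zero,
            mul_zero, neg_zero]; exact Submodule.zero_mem _)
  have hι : ∀ v : Fin 2 → ℂ, ExteriorAlgebra.ι ℂ v ∈ M := by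
    intro v
    have hv : v = v 0 • (Pi.single 0 1 : Fin 2 → ℂ) + v 1 • (Pi.single 1 1 : Fin 2 → ℂ) := by
      funext i; fin_cases i <;> simp
    rw [hv, map_add, map_smul, map_smul]
    exact Submodule.add_mem _ (Submodule.smul_mem _ _ ha) (Submodule.smul_mem _ _ hb)
  rw [eq_top_iff]
  rintro x -
  induction x using ExteriorAlgebra.induction with
  | algebraMap r =>
    rw [Algebra.algebraMap_eq_smul_one]; exact Submodule.smul_mem _ _ h1
  | ι v => exact hι v
  | mul x y hx hy => exact hmul x hx y hy
  | add x y hx hy => exact Submodule.add_mem _ hx hy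

theorem peter_weyl_su11
    (Λ : Type*) [NormedAddCommGroup Λ] [NormedSpace ℂ Λ]
    (e : Λ ≃ₗ[ℂ] ExteriorAlgebra ℂ (Fin 2 → ℂ))
    (oneΛ θΛ ηΛ θηΛ : Λ)
    (hone : oneΛ = e.symm 1)
    (hθ : θΛ = e.symm (ExteriorAlgebra.ι ℂ (Pi.single 0 1 : Fin 2 → ℂ)))
    (hη : ηΛ = e.symm (ExteriorAlgebra.ι ℂ (Pi.single 1 1 : Fin 2 → ℂ)))
    (hθη : θηΛ = e.symm (ExteriorAlgebra.ι ℂ (Pi.single 0 1 : Fin 2 → ℂ) *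
      ExteriorAlgebra.ι ℂ (Pi.single 1 1 : Fin 2 → ℂ))) :
    Dense (↑(Submodule.span ℂ
      {f : C(Circle, Λ) |
        (∃ m : ℤ,
          (∀ z : Circle, f z = ((z : ℂ) ^ m) • (oneΛ + (m : ℂ) • θηΛ)) ∨
          (∀ z : Circle, f z = ((z : ℂ) ^ m) • (oneΛ - (m : ℂ) • θηΛ)) ∨
          (∀ z : Circle, f z = ((z : ℂ) ^ m) • (θΛ - Complex.I • ηΛ)) ∨
          (∀ z : Circle, f z = ((z : ℂ) ^ m) • (θΛ + Complex.I • ηΛ))) ∨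
        (∀ z : Circle, f z = oneΛ) ∨ (∀ z : Circle, f z = θΛ) ∨
        (∀ z : Circle, f z = ηΛ) ∨ (∀ z : Circle, f z = θηΛ)}) :
      Set C(Circle, Λ)) := by
  set S : Set C(Circle, Λ) :=
      {f : C(Circle, Λ) |
        (∃ m : ℤ,
          (∀ z : Circle, f z = ((z : ℂ) ^ m) • (oneΛ + (m : ℂ) • θηΛ)) ∨
          (∀ z : Circle, f z = ((z : ℂ) ^ m) • (oneΛ - (m : ℂ) • θηΛ)) ∨
          (∀ z : Circle, f z = ((z : ℂ) ^ m) • (θΛ - Complex.I • ηΛ)) ∨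
          (∀ z : Circle, f z = ((z : ℂ) ^ m) • (θΛ + Complex.I • ηΛ))) ∨
        (∀ z : Circle, f z = oneΛ) ∨ (∀ z : Circle, f z = θΛ) ∨
        (∀ z : Circle, f z = ηΛ) ∨ (∀ z : Circle, f z = θηΛ)} with hS
  set M := Submodule.span ℂ S with hMdef
  -- the four distinguished vectors span `Λ`
  have hspan : Submodule.span ℂ ({oneΛ, θΛ, ηΛ, θηΛ} : Set Λ) = ⊤ := by
    have himg : ({oneΛ, θΛ, ηΛ, θηΛ} : Set Λ) =
        e.symm.toLinearMap '' ({1, ExteriorAlgebra.ι ℂ (Pi.single 0 1 : Fin 2 → ℂ),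
          ExteriorAlgebra.ι ℂ (Pi.single 1 1 : Fin 2 → ℂ),
          ExteriorAlgebra.ι ℂ (Pi.single 0 1 : Fin 2 → ℂ) *
            ExteriorAlgebra.ι ℂ (Pi.single 1 1 : Fin 2 → ℂ)} :
          Set (ExteriorAlgebra ℂ (Fin 2 → ℂ))) := by
      rw [hone, hθ, hη, hθη]
      simp [Set.image_insert_eq]
    rw [himg, Submodule.span_image, ext_span_top, Submodule.map_top,
      LinearMap.range_eq_top]
    exact e.symm.surjective
  haveI : FiniteDimensional ℂ Λ := by
    have h1 : FiniteDimensional ℂ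
        (Submodule.span ℂ ({oneΛ, θΛ, ηΛ, θηΛ} : Set Λ)) :=
      FiniteDimensional.span_of_finite ℂ (Set.toFinite _)
    rw [hspan] at h1
    exact Submodule.topEquiv.finiteDimensional
  -- the "monomial" functions `z ↦ z^m • v`
  have contmono : ∀ (m : ℤ) (v : Λ), Continuous fun z : Circle => ((z : ℂ) ^ m) • v :=
    fun m v => (charC m).continuous.smul continuous_const
  have key : ∀ (m : ℤ) (v : Λ),
      (⟨fun z => ((z : ℂ) ^ m) • v, contmono m v⟩ : C(Circle, Λ)) ∈ M := by
    intro m v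
    have hv : v ∈ Submodule.span ℂ ({oneΛ, θΛ, ηΛ, θηΛ} : Set Λ) := by
      rw [hspan]; trivial
    refine Submodule.span_induction
      (p := fun v _ => (⟨fun z => ((z : ℂ) ^ m) • v, contmono m v⟩ : C(Circle, Λ)) ∈ M)
      ?_ ?_ ?_ ?_ hv
    · intro w hw
      have hf₁ : (⟨fun z => ((z : ℂ) ^ m) • (oneΛ + (m : ℂ) • θηΛ),
          contmono m _⟩ : C(Circle, Λ)) ∈ M :=
        Submodule.subset_span (Or.inl ⟨m, Or.inl fun z => rfl⟩)
      have hf₂ : (⟨fun z => ((z : ℂ) ^ m) • (oneΛ - (m : ℂ) • θηΛ),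
          contmono m _⟩ : C(Circle, Λ)) ∈ M :=
        Submodule.subset_span (Or.inl ⟨m, Or.inr (Or.inl fun z => rfl)⟩)
      have hf₃ : (⟨fun z => ((z : ℂ) ^ m) • (θΛ - Complex.I • ηΛ),
          contmono m _⟩ : C(Circle, Λ)) ∈ M :=
        Submodule.subset_span (Or.inl ⟨m, Or.inr (Or.inr (Or.inl fun z => rfl))⟩)
      have hf₄ : (⟨fun z => ((z : ℂ) ^ m) • (θΛ + Complex.I • ηΛ),
          contmono m _⟩ : C(Circle, Λ)) ∈ M :=
        Submodule.subset_span (Or.inl ⟨m, Or.inr (Or.inr (Or.inr fun z => rfl))⟩)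
      simp only [Set.mem_insert_iff, Set.mem_singleton_iff] at hw
      have honemem : (⟨fun z => ((z : ℂ) ^ m) • oneΛ, contmono m oneΛ⟩ : C(Circle, Λ)) ∈ M := by
        have : (⟨fun z => ((z : ℂ) ^ m) • oneΛ, contmono m _⟩ : C(Circle, Λ)) =
            (2⁻¹ : ℂ) • (⟨fun z => ((z : ℂ) ^ m) • (oneΛ + (m : ℂ) • θηΛ), contmono m _⟩ +
              ⟨fun z => ((z : ℂ) ^ m) • (oneΛ - (m : ℂ) • θηΛ), contmono m _⟩) := by
          ext z
          simp only [ContinuousMap.coe_mk, ContinuousMap.smul_apply, ContinuousMap.add_apply]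
          match_scalars <;> ring
        rw [this]
        exact Submodule.smul_mem _ _ (Submodule.add_mem _ hf₁ hf₂)
      have hθmem : (⟨fun z => ((z : ℂ) ^ m) • θΛ, contmono m θΛ⟩ : C(Circle, Λ)) ∈ M := by
        have : (⟨fun z => ((z : ℂ) ^ m) • θΛ, contmono m _⟩ : C(Circle, Λ)) =
            (2⁻¹ : ℂ) • (⟨fun z => ((z : ℂ) ^ m) • (θΛ - Complex.I • ηΛ), contmono m _⟩ +
              ⟨fun z => ((z : ℂ) ^ m) • (θΛ + Complex.I • ηΛ), contmono m _⟩) := by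
          ext z
          simp only [ContinuousMap.coe_mk, ContinuousMap.smul_apply, ContinuousMap.add_apply]
          match_scalars <;> ring
        rw [this]
        exact Submodule.smul_mem _ _ (Submodule.add_mem _ hf₃ hf₄)
      have hηmem : (⟨fun z => ((z : ℂ) ^ m) • ηΛ, contmono m ηΛ⟩ : C(Circle, Λ)) ∈ M := by
        have : (⟨fun z => ((z : ℂ) ^ m) • ηΛ, contmono m _⟩ : C(Circle, Λ)) =
            ((2 * Complex.I)⁻¹ : ℂ) •
              (⟨fun z => ((z : ℂ) ^ m) • (θΛ + Complex.I • ηΛ), contmono m _⟩ -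
                ⟨fun z => ((z : ℂ) ^ m) • (θΛ - Complex.I • ηΛ), contmono m _⟩) := by
          ext z
          simp only [ContinuousMap.coe_mk, ContinuousMap.smul_apply, ContinuousMap.sub_apply]
          match_scalars <;> field_simp <;> ring
        rw [this]
        exact Submodule.smul_mem _ _ (Submodule.sub_mem _ hf₄ hf₃)
      have hθηmem : (⟨fun z => ((z : ℂ) ^ m) • θηΛ, contmono m θηΛ⟩ : C(Circle, Λ)) ∈ M := by
        by_cases hm : m = 0
        · subst hm
          refine Submodule.subset_span ?_
          refine Or.inr (Or.inr (Or.inr (Or.inr fun z => ?_)))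
          simp
        · have : (⟨fun z => ((z : ℂ) ^ m) • θηΛ, contmono m _⟩ : C(Circle, Λ)) =
              ((2 * (m : ℂ))⁻¹ : ℂ) •
                (⟨fun z => ((z : ℂ) ^ m) • (oneΛ + (m : ℂ) • θηΛ), contmono m _⟩ -
                  ⟨fun z => ((z : ℂ) ^ m) • (oneΛ - (m : ℂ) • θηΛ), contmono m _⟩) := by
            ext z
            simp only [ContinuousMap.coe_mk, ContinuousMap.smul_apply, ContinuousMap.sub_apply]
            have hm' : (m : ℂ) ≠ 0 := Int.cast_ne_zero.mpr hm
            match_scalars <;> field_simp [hm'] <;> ring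
          rw [this]
          exact Submodule.smul_mem _ _ (Submodule.sub_mem _ hf₁ hf₂)
      rcases hw with h | h | h | h
      · exact h ▸ honemem
      · exact h ▸ hθmem
      · exact h ▸ hηmem
      · exact h ▸ hθηmem
    · show (⟨fun z => ((z : ℂ) ^ m) • (0 : Λ), contmono m 0⟩ : C(Circle, Λ)) ∈ M
      have : (⟨fun z => ((z : ℂ) ^ m) • (0 : Λ), contmono m _⟩ : C(Circle, Λ)) = 0 := by
        ext z; simp
      rw [this]; exact Submodule.zero_mem _
    · intro a b _ _ ha hb
      show (⟨fun z => ((z : ℂ) ^ m) • (a + b), contmono m (a + b)⟩ : C(Circle, Λ)) ∈ M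
      have : (⟨fun z => ((z : ℂ) ^ m) • (a + b), contmono m _⟩ : C(Circle, Λ)) =
          ⟨fun z => ((z : ℂ) ^ m) • a, contmono m _⟩ +
            ⟨fun z => ((z : ℂ) ^ m) • b, contmono m _⟩ := by
        ext z; simp [smul_add]
      rw [this]; exact Submodule.add_mem _ ha hb
    · intro c a _ ha
      show (⟨fun z => ((z : ℂ) ^ m) • (c • a), contmono m (c • a)⟩ : C(Circle, Λ)) ∈ M
      have : (⟨fun z => ((z : ℂ) ^ m) • (c • a), contmono m _⟩ : C(Circle, Λ)) =
          c • ⟨fun z => ((z : ℂ) ^ m) • a, contmono m _⟩ := by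
        ext z
        simp only [ContinuousMap.coe_mk, ContinuousMap.smul_apply]
        rw [smul_comm]
      rw [this]; exact Submodule.smul_mem _ _ ha
  -- reduce density to a closure statement
  rw [dense_iff_closure_eq, Set.eq_univ_iff_forall]
  intro f
  have hMC : (closure (M : Set C(Circle, Λ))) = (M.topologicalClosure : Set C(Circle, Λ)) :=
    (Submodule.topologicalClosure_coe M).symm
  rw [hMC]
  -- decompose `f` along a basis of `Λ`
  let b := Module.finBasis ℂ Λ
  let fi : Fin (Module.finrank ℂ Λ) → C(Circle, ℂ) := fun i =>
    ⟨fun z => b.coord i (f z),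
      ((b.coord i).continuous_of_finiteDimensional).comp f.continuous⟩
  let T : Fin (Module.finrank ℂ Λ) → (C(Circle, ℂ) →L[ℂ] C(Circle, Λ)) := fun i =>
    (ContinuousLinearMap.toSpanSingleton ℂ (b i)).compLeftContinuous ℂ Circle
  have hT : ∀ i, ∀ g ∈ Submodule.span ℂ (Set.range charC), T i g ∈ M := by
    intro i g hg
    refine Submodule.span_induction ?_ ?_ ?_ ?_ hg
    · rintro _ ⟨m, rfl⟩
      have : T i (charC m) = ⟨fun z => ((z : ℂ) ^ m) • (b i), contmono m _⟩ := by
        ext z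
        show ContinuousLinearMap.toSpanSingleton ℂ (b i) (charC m z) = ((z : ℂ) ^ m) • b i
        rw [ContinuousLinearMap.toSpanSingleton_apply, charC_apply]
      rw [this]; exact key m (b i)
    · simp only [map_zero]; exact Submodule.zero_mem _
    · intro x y _ _ hx hy; rw [map_add]; exact Submodule.add_mem _ hx hy
    · intro c x _ hx; rw [map_smul]; exact Submodule.smul_mem _ _ hx
  have hfi : ∀ i, T i (fi i) ∈ closure (M : Set C(Circle, Λ)) := by
    intro i
    have h1 : fi i ∈ closure (Submodule.span ℂ (Set.range charC) : Set C(Circle, ℂ)) := by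
      rw [charAlg_dense.closure_eq]; trivial
    have h2 : T i (fi i) ∈
        closure (T i '' (Submodule.span ℂ (Set.range charC) : Set C(Circle, ℂ))) :=
      image_closure_subset_closure_image (T i).continuous ⟨fi i, h1, rfl⟩
    have h3 : T i '' (Submodule.span ℂ (Set.range charC) : Set C(Circle, ℂ)) ⊆
        (M : Set C(Circle, Λ)) := by
      rintro _ ⟨g, hg, rfl⟩; exact hT i g hg
    exact closure_mono h3 h2
  have hsum : f = ∑ i, T i (fi i) := by
    ext z
    have hrepr := b.sum_repr (f z)
    rw [ContinuousMap.sum_apply]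
    have : ∀ i, T i (fi i) z = b.repr (f z) i • b i := by
      intro i
      show ContinuousLinearMap.toSpanSingleton ℂ (b i) (fi i z) = b.repr (f z) i • b i
      rw [ContinuousLinearMap.toSpanSingleton_apply]
      show b.coord i (f z) • b i = _
      rw [Module.Basis.coord_apply]
    rw [Finset.sum_congr rfl fun i _ => this i]
    exact hrepr.symm
  have : f ∈ M.topologicalClosure := by
    rw [hsum]
    exact Submodule.sum_mem _ fun i _ => by
      rw [← SetLike.mem_coe, Submodule.topologicalClosure_coe]; exact hfi i
  rwa [← SetLike.mem_coe] at this
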